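/- The function d(α) := min over stopping times T ≤ κ with P(T<S) ≤ α of E(T−S)^+ is convex and piecewise linear in α ∈ [0,1], and its break-points are achieved by non-randomized stopping times. -/

import Mathlib

open Finset
open scoped Classical

noncomputable section

variable {Ω : Type*} [Fintype Ω] {𝒳 : Type*} {𝒴 : Type*}

/-- Probability of an event under weights `p` on a finite sample space. -/
def prW (p : Ω → ℝ) (A : Ω → Prop) : ℝ := ∑ ω, if A ω then p ω else 0

/-- Expectation under weights `p`. -/
def exW (p : Ω → ℝ) (f : Ω → ℝ) : ℝ := ∑ ω, p ω * f ω

/-- `p` is a probability weight function. -/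
def IsProbW (p : Ω → ℝ) : Prop := (∀ ω, 0 ≤ p ω) ∧ ∑ ω, p ω = 1

/-- Conditional probability `P(A | B)`. -/
def cprW (p : Ω → ℝ) (A B : Ω → Prop) : ℝ := prW p (fun ω => A ω ∧ B ω) / prW p B

/-- Conditional expectation `E(f | B)`. -/
def cexW (p : Ω → ℝ) (f : Ω → ℝ) (B : Ω → Prop) : ℝ :=
  (∑ ω, if B ω then p ω * f ω else 0) / prW p B

/-- positive part of a real number -/
def posP (x : ℝ) : ℝ := max x 0

/-- `S` is a (non-randomized) stopping time w.r.t. the process `X` (time starts at 1):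
its value is determined by the observations up to itself. -/
def IsSTW (X : ℕ → Ω → 𝒳) (S : Ω → ℕ) : Prop :=
  ∀ ω ω', (∀ i, 1 ≤ i → i ≤ S ω → X i ω = X i ω') → S ω' = S ω

/-- The path of the process `Y` at sample `ω`. -/
def pathOf (Y : ℕ → Ω → 𝒴) (ω : Ω) : ℕ → 𝒴 := fun i => Y i ω

/-- The path `f` extends (passes through) the node `y` (a finite string). -/
def ExtN (y : List 𝒴) (f : ℕ → 𝒴) : Prop := ∀ i : Fin y.length, f (i.1 + 1) = y.get i

/-- A stopping function on paths: its value depends only on the path up to that value.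
This is the path-representation of a non-randomized stopping time (a tree). -/
def IsStopFun (t : (ℕ → 𝒴) → ℕ) : Prop :=
  ∀ f g, (∀ i, 1 ≤ i → i ≤ t f → f i = g i) → t g = t f

/-- `y` is an internal node of the tree `t`. -/
def InternalNode (t : (ℕ → 𝒴) → ℕ) (y : List 𝒴) : Prop :=
  ∀ f, ExtN y f → y.length < t f

/-- `u` is (the stopping function of) a subtree rooted at node `y`. -/
def IsSubtreeAt (y : List 𝒴) (u : (ℕ → 𝒴) → ℕ) : Prop :=
  IsStopFun u ∧ ∀ f, ExtN y f → y.length ≤ u f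

/-- false-alarm weight `a(y)` of node `y` -/
def aW (p : Ω → ℝ) (Y : ℕ → Ω → 𝒴) (S : Ω → ℕ) (y : List 𝒴) : ℝ :=
  prW p (fun ω => ExtN y (pathOf Y ω) ∧ y.length < S ω)

/-- delay weight `b(y)` of node `y` -/
def bW (p : Ω → ℝ) (Y : ℕ → Ω → 𝒴) (S : Ω → ℕ) (y : List 𝒴) : ℝ :=
  exW p (fun ω => if ExtN y (pathOf Y ω) then posP ((y.length : ℝ) - (S ω : ℝ)) else 0)

/-- false-alarm weight `a(T_y)` of a subtree `u` rooted at `y` (the sum of `a(γ)`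
over its leaves `γ`). -/
def aSubW (p : Ω → ℝ) (Y : ℕ → Ω → 𝒴) (S : Ω → ℕ) (y : List 𝒴) (u : (ℕ → 𝒴) → ℕ) : ℝ :=
  prW p (fun ω => ExtN y (pathOf Y ω) ∧ u (pathOf Y ω) < S ω)

/-- delay weight `b(T_y)` of a subtree `u` rooted at `y` (the sum of `b(γ)` over its leaves). -/
def bSubW (p : Ω → ℝ) (Y : ℕ → Ω → 𝒴) (S : Ω → ℕ) (y : List 𝒴) (u : (ℕ → 𝒴) → ℕ) : ℝ :=
  exW p (fun ω => if ExtN y (pathOf Y ω) then posP ((u (pathOf Y ω) : ℝ) - (S ω : ℝ)) else 0)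

/-- Lagrangian cost `J_λ(T_y)` of the subtree `u` rooted at `y`. -/
def JsubW (p : Ω → ℝ) (Y : ℕ → Ω → 𝒴) (S : Ω → ℕ) (lam : ℝ) (y : List 𝒴)
    (u : (ℕ → 𝒴) → ℕ) : ℝ :=
  bSubW p Y S y u + lam * aSubW p Y S y u

/-- Lagrangian cost `J_λ(y)` of the single node `y`. -/
def JnodeW (p : Ω → ℝ) (Y : ℕ → Ω → 𝒴) (S : Ω → ℕ) (lam : ℝ) (y : List 𝒴) : ℝ :=
  bW p Y S y + lam * aW p Y S y

/-- `u` is the smallest minimal-cost rooted subtree `T_y(λ)` of `t` at node `y`,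
for Lagrange multiplier `lam`. -/
def IsOptSubtreeAt (p : Ω → ℝ) (Y : ℕ → Ω → 𝒴) (S : Ω → ℕ) (lam : ℝ)
    (t : (ℕ → 𝒴) → ℕ) (y : List 𝒴) (u : (ℕ → 𝒴) → ℕ) : Prop :=
  IsSubtreeAt y u ∧ (∀ f, ExtN y f → u f ≤ t f) ∧
  (∀ v, IsSubtreeAt y v → (∀ f, ExtN y f → v f ≤ t f) →
    JsubW p Y S lam y u ≤ JsubW p Y S lam y v) ∧
  (∀ v, IsSubtreeAt y v → (∀ f, ExtN y f → v f ≤ t f) →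
    JsubW p Y S lam y v = JsubW p Y S lam y u → ∀ f, ExtN y f → u f ≤ v f)

/-- the tradeoff quantity `g(y, T) = (b(T_y) - b(y)) / (a(y) - a(T_y))`
(with the convention 0/0 = 0, which holds automatically for real division). -/
def gW (p : Ω → ℝ) (Y : ℕ → Ω → 𝒴) (S : Ω → ℕ) (t : (ℕ → 𝒴) → ℕ) (y : List 𝒴) : ℝ :=
  (bSubW p Y S y t - bW p Y S y) / (aW p Y S y - aSubW p Y S y t)

/-- node permuted by a coordinate permutation -/
def permNode (y : List 𝒴) (π : Equiv.Perm (Fin y.length)) : List 𝒴 :=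
  List.ofFn fun i => y.get (π i)

/-- permutation invariance of a stopping time w.r.t. process `Y`:
`P(T ≤ n | Y^n = y^n) = P(T ≤ n | Y^n = π(y^n))`. -/
def PermInvST (p : Ω → ℝ) (Y : ℕ → Ω → 𝒴) (T : Ω → ℕ) (κ : ℕ) : Prop :=
  ∀ y : List 𝒴, y.length ≤ κ → ∀ π : Equiv.Perm (Fin y.length),
    cprW p (fun ω => T ω ≤ y.length) (fun ω => ExtN y (pathOf Y ω)) =
    cprW p (fun ω => T ω ≤ y.length) (fun ω => ExtN (permNode y π) (pathOf Y ω))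

/-- the pairs `(X_i, Y_i)` are i.i.d. (over the first `κ` time steps). -/
def IIDPairs [Fintype 𝒳] [Fintype 𝒴] (p : Ω → ℝ) (X : ℕ → Ω → 𝒳) (Y : ℕ → Ω → 𝒴)
    (κ : ℕ) : Prop :=
  ∃ μ : 𝒳 × 𝒴 → ℝ, (∀ z, 0 ≤ μ z) ∧ (∑ z, μ z = 1) ∧
    ∀ (x : ℕ → 𝒳) (yf : ℕ → 𝒴),
      prW p (fun ω => ∀ i, 1 ≤ i → i ≤ κ → X i ω = x i ∧ Y i ω = yf i) =
        ∏ i ∈ Finset.Icc 1 κ, μ (x i, yf i)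

/-- a randomized stopping time bounded by `κ`, given by its conditional stopping
kernel `q n y^n = P(T = n | Y^n = y^n)`. -/
def IsRandST (q : ℕ → (ℕ → 𝒴) → ℝ) (κ : ℕ) : Prop :=
  (∀ n f, 0 ≤ q n f) ∧
  (∀ n f g, (∀ i, 1 ≤ i → i ≤ n → f i = g i) → q n g = q n f) ∧
  (∀ f, ∑ n ∈ Finset.Icc 1 κ, q n f = 1)

/-- false-alarm probability `P(T < S)` of a randomized stopping time -/
def faR (p : Ω → ℝ) (Y : ℕ → Ω → 𝒴) (S : Ω → ℕ) (κ : ℕ) (q : ℕ → (ℕ → 𝒴) → ℝ) : ℝ :=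
  exW p (fun ω => ∑ n ∈ Finset.Icc 1 κ, q n (pathOf Y ω) * (if n < S ω then 1 else 0))

/-- expected reaction delay `E(T - S)⁺` of a randomized stopping time -/
def delayR (p : Ω → ℝ) (Y : ℕ → Ω → 𝒴) (S : Ω → ℕ) (κ : ℕ) (q : ℕ → (ℕ → 𝒴) → ℝ) : ℝ :=
  exW p (fun ω => ∑ n ∈ Finset.Icc 1 κ, q n (pathOf Y ω) * posP ((n : ℝ) - (S ω : ℝ)))

/-- the optimal tradeoff curve `d(α)` -/
def dW (p : Ω → ℝ) (Y : ℕ → Ω → 𝒴) (S : Ω → ℕ) (κ : ℕ) (α : ℝ) : ℝ :=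
  sInf {v | ∃ q, IsRandST q κ ∧ faR p Y S κ q ≤ α ∧ v = delayR p Y S κ q}

/-- the stopping kernel of a non-randomized stopping function -/
def detKer (t : (ℕ → 𝒴) → ℕ) : ℕ → (ℕ → 𝒴) → ℝ := fun n f => if t f = n then 1 else 0

/-- prefix of length `n` of a path (the node of depth `n` it visits) -/
def prefixOf (f : ℕ → 𝒴) (n : ℕ) : List 𝒴 := (List.range n).map fun i => f (i + 1)

/-- the one-step-lookahead node cost `c(y^n)` -/
def cnodeW (p : Ω → ℝ) (Y : ℕ → Ω → 𝒴) (S : Ω → ℕ) (lam : ℝ) (y : List 𝒴) : ℝ :=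
  cexW p (fun ω => posP ((y.length : ℝ) - (S ω : ℝ))) (fun ω => ExtN y (pathOf Y ω)) +
    lam * cprW p (fun ω => y.length < S ω) (fun ω => ExtN y (pathOf Y ω))

end


noncomputable section Work

open scoped Classical

namespace ChgPt

/-! ### Sorted grid machinery -/

variable (C : Finset ℝ)

def gridLen : ℕ := (C.sort (· ≤ ·)).length
def gridC : ℕ → ℝ := fun j => (C.sort (· ≤ ·)).getD j 0
def gridM : ℕ := gridLen C - 1

variable {C}

lemma grid_lt {i j : ℕ} (hij : i < j) (hj : j < gridLen C) : gridC C i < gridC C j := by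
  rw [gridLen] at hj
  simp only [gridC]
  rw [List.getD_eq_getElem _ _ (lt_trans hij hj), List.getD_eq_getElem _ _ hj]
  exact List.Pairwise.rel_get_of_lt (Finset.sortedLT_sort C).pairwise
    (a := ⟨i, lt_trans hij hj⟩) (b := ⟨j, hj⟩) hij

lemma grid_le {i j : ℕ} (hij : i ≤ j) (hj : j < gridLen C) : gridC C i ≤ gridC C j := by
  rcases eq_or_lt_of_le hij with h | h
  · rw [h]
  · exact le_of_lt (grid_lt h hj)

lemma grid_mem {a : ℝ} (ha : a ∈ C) : ∃ i, i < gridLen C ∧ gridC C i = a := by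
  have : a ∈ C.sort (· ≤ ·) := (Finset.mem_sort _).mpr ha
  obtain ⟨n, hn, hna⟩ := List.mem_iff_getElem.mp this
  rw [gridLen]
  exact ⟨n, hn, by simp only [gridC]; rw [List.getD_eq_getElem _ _ hn]; exact hna⟩

lemma grid_mem' {j : ℕ} (hj : j < gridLen C) : gridC C j ∈ C := by
  rw [gridLen] at hj
  simp only [gridC]
  rw [List.getD_eq_getElem _ _ hj]
  exact (Finset.mem_sort _).mp (List.getElem_mem hj)

lemma grid_telescope (c : ℕ → ℝ) {ia ib : ℕ} (h : ia ≤ ib) :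
    ∑ j ∈ Finset.Ico ia ib, (c (j + 1) - c j) = c ib - c ia := by
  induction ib, h using Nat.le_induction with
  | base => simp
  | succ n hn ih => rw [Finset.sum_Ico_succ_top (by omega), ih]; ring

lemma grid_key {a b : ℝ} (ha : a ∈ C) (hb : b ∈ C) (hab : a ≤ b) :
    ∑ j ∈ Finset.range (gridM C),
      (if a < gridC C (j + 1) ∧ gridC C (j + 1) ≤ b then gridC C (j + 1) - gridC C j else 0)
      = b - a := by
  obtain ⟨ia, hia, rfl⟩ := grid_mem ha
  obtain ⟨ib, hib, rfl⟩ := grid_mem hb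
  have hiaib : ia ≤ ib := by
    by_contra hcon
    exact absurd (grid_lt (by omega) hia) (not_lt.mpr hab)
  have hble : ib ≤ gridM C := by rw [gridM]; omega
  have hstep : ∀ j ∈ Finset.range (gridM C),
      (if gridC C ia < gridC C (j + 1) ∧ gridC C (j + 1) ≤ gridC C ib
        then gridC C (j + 1) - gridC C j else 0)
      = if j ∈ Finset.Ico ia ib then gridC C (j + 1) - gridC C j else 0 := by
    intro j hj
    rw [Finset.mem_range] at hj
    have hj1 : j + 1 < gridLen C := by rw [gridM] at hj; omega
    refine if_congr ?_ rfl rfl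
    rw [Finset.mem_Ico]
    constructor
    · rintro ⟨h1, h2⟩
      constructor
      · by_contra hcon
        exact absurd (grid_le (by omega) hia) (not_le.mpr h1)
      · by_contra hcon
        exact absurd (grid_lt (by omega) hj1) (not_lt.mpr h2)
    · rintro ⟨h1, h2⟩
      exact ⟨grid_lt (by omega) hj1, grid_le (by omega) hib⟩
  rw [Finset.sum_congr rfl hstep, Finset.sum_ite_mem,
    (Finset.inter_eq_right).mpr (fun j hj => by
      rw [Finset.mem_Ico] at hj; rw [Finset.mem_range]; omega),
    grid_telescope _ hiaib]

lemma grid_ends (h0 : (0:ℝ) ∈ C) (h1 : (1:ℝ) ∈ C) (hC : ∀ x ∈ C, 0 ≤ x ∧ x ≤ 1) :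
    gridC C 0 = 0 ∧ gridC C (gridM C) = 1 := by
  obtain ⟨i0, hi0, e0⟩ := grid_mem h0
  obtain ⟨i1, hi1, e1⟩ := grid_mem h1
  have hm : gridM C < gridLen C := by rw [gridM]; omega
  constructor
  · refine le_antisymm ?_ ?_
    · rw [← e0]; exact grid_le (by omega) hi0
    · exact (hC _ (grid_mem' (by omega))).1
  · refine le_antisymm ?_ ?_
    · exact (hC _ (grid_mem' hm)).2
    · rw [← e1]; exact grid_le (by rw [gridM]; omega) hm

lemma grid_wsum (h0 : (0:ℝ) ∈ C) (h1 : (1:ℝ) ∈ C) (hC : ∀ x ∈ C, 0 ≤ x ∧ x ≤ 1) :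
    ∑ j ∈ Finset.range (gridM C), (gridC C (j + 1) - gridC C j) = 1 := by
  have h := grid_ends h0 h1 hC
  rw [Finset.range_eq_Ico, grid_telescope _ (Nat.zero_le _), h.1, h.2, sub_zero]

lemma grid_wnonneg {j : ℕ} (hj : j ∈ Finset.range (gridM C)) :
    0 ≤ gridC C (j + 1) - gridC C j := by
  rw [Finset.mem_range, gridM] at hj
  exact sub_nonneg.mpr (grid_le (by omega) (by omega))

lemma grid_pos (h0 : (0:ℝ) ∈ C) (h1 : (1:ℝ) ∈ C) (hC : ∀ x ∈ C, 0 ≤ x ∧ x ≤ 1)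
    {j : ℕ} (hj : j ∈ Finset.range (gridM C)) :
    0 < gridC C (j + 1) ∧ gridC C (j + 1) ≤ 1 := by
  rw [Finset.mem_range, gridM] at hj
  have he := grid_ends h0 h1 hC
  constructor
  · rw [← he.1]; exact grid_lt (by omega) (by omega)
  · rw [← he.2]; exact grid_le (by rw [gridM]; omega) (by rw [gridM]; omega)

/-! ### Extension of sample-space stopping times to path stopping functions -/

variable {Ω : Type*} [Fintype Ω] {𝒴 : Type*}
variable (Y : ℕ → Ω → 𝒴) (κ : ℕ)

/-- `s : Ω → ℕ` is a valid (bounded) stopping time w.r.t. `Y`. -/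
def ValidS (s : Ω → ℕ) : Prop :=
  (∀ ω, 1 ≤ s ω ∧ s ω ≤ κ) ∧
  ∀ ω ω', (∀ i, 1 ≤ i → i ≤ s ω → Y i ω = Y i ω') → s ω' = s ω

/-- the candidate set of matching stopping values along a path -/
def candSet (s : Ω → ℕ) (f : ℕ → 𝒴) : Set ℕ :=
  {n | ∃ ω, s ω = n ∧ ∀ i, 1 ≤ i → i ≤ n → f i = Y i ω}

/-- extension of `s` to a stopping function on paths -/
def extST (s : Ω → ℕ) : (ℕ → 𝒴) → ℕ := fun f =>
  if (candSet Y s f).Nonempty then sInf (candSet Y s f) else κ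

variable {Y κ}

set_option linter.unusedSectionVars false

lemma extST_path {s : Ω → ℕ} (hs : ValidS Y κ s) (ω : Ω) :
    extST Y κ s (pathOf Y ω) = s ω := by
  have h : (candSet Y s (pathOf Y ω)).Nonempty := ⟨s ω, ω, rfl, fun i _ _ => rfl⟩
  rw [extST, if_pos h]
  obtain ⟨ω₀, h₀, h₁⟩ := Nat.sInf_mem h
  have h2 : s ω = s ω₀ := hs.2 ω₀ ω (fun i hi hi' => by
    rw [h₀] at hi'
    exact (h₁ i hi hi').symm)
  rw [h2]
  exact h₀.symm

lemma extST_bounds {s : Ω → ℕ} (hs : ValidS Y κ s) (hκ : 1 ≤ κ) (f : ℕ → 𝒴) :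
    1 ≤ extST Y κ s f ∧ extST Y κ s f ≤ κ := by
  rw [extST]
  split
  · rename_i h
    obtain ⟨ω₀, h₀, -⟩ := Nat.sInf_mem h
    have h3 := hs.1 ω₀
    rw [h₀] at h3
    exact h3
  · omega

lemma extST_stopFun {s : Ω → ℕ} (hs : ValidS Y κ s) : IsStopFun (extST Y κ s) := by
  intro f g hfg
  by_cases h : (candSet Y s f).Nonempty
  · have hf : extST Y κ s f = sInf (candSet Y s f) := by rw [extST, if_pos h]
    obtain ⟨ω₀, h₀, h₁⟩ := Nat.sInf_mem h
    have hg : (candSet Y s g).Nonempty := by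
      refine ⟨sInf (candSet Y s f), ω₀, h₀, fun i hi hi' => ?_⟩
      rw [← hfg i hi (by rw [hf]; omega), h₁ i hi hi']
    rw [hf, extST, if_pos hg]
    have hle : sInf (candSet Y s g) ≤ sInf (candSet Y s f) := by
      apply Nat.sInf_le
      refine ⟨ω₀, h₀, fun i hi hi' => ?_⟩
      rw [← hfg i hi (by rw [hf]; omega), h₁ i hi hi']
    refine le_antisymm hle ?_
    obtain ⟨ω₁, e₁, e₂⟩ := Nat.sInf_mem hg
    apply Nat.sInf_le
    refine ⟨ω₁, e₁, fun i hi hi' => ?_⟩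
    rw [hfg i hi (by rw [hf]; omega)]
    exact e₂ i hi hi'
  · have hf : extST Y κ s f = κ := by rw [extST, if_neg h]
    rw [hf]
    have hg : ¬ (candSet Y s g).Nonempty := by
      rintro ⟨n, ω₁, e₁, e₂⟩
      have hn : n ≤ κ := e₁ ▸ (hs.1 ω₁).2
      exact h ⟨n, ω₁, e₁, fun i hi hi' => by
        rw [hfg i hi (by omega)]; exact e₂ i hi hi'⟩
    rw [extST, if_neg hg]

lemma validS_const (hκ : 1 ≤ κ) {k : ℕ} (hk1 : 1 ≤ k) (hk : k ≤ κ) :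
    ValidS Y κ (fun _ : Ω => k) :=
  ⟨fun _ => ⟨hk1, hk⟩, fun _ _ _ => rfl⟩

/-! ### Deterministic kernels -/

variable (p : Ω → ℝ) (S : Ω → ℕ)

lemma detKer_sum {t : (ℕ → 𝒴) → ℕ} (hb : ∀ f, 1 ≤ t f ∧ t f ≤ κ) (f : ℕ → 𝒴) (g : ℕ → ℝ) :
    ∑ n ∈ Finset.Icc 1 κ, detKer t n f * g n = g (t f) := by
  simp only [detKer, ite_mul, one_mul, zero_mul]
  rw [Finset.sum_ite_eq, if_pos (Finset.mem_Icc.mpr (hb f))]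

lemma detKer_randST {t : (ℕ → 𝒴) → ℕ} (ht : IsStopFun t) (hb : ∀ f, 1 ≤ t f ∧ t f ≤ κ) :
    IsRandST (detKer t) κ := by
  refine ⟨fun n f => by rw [detKer]; positivity, ?_, ?_⟩
  · intro n f g hfg
    rw [detKer, detKer]
    by_cases hf : t f = n
    · rw [if_pos hf, if_pos]
      rw [ht f g (fun i hi hi' => hfg i hi (by omega)), hf]
    · rw [if_neg hf, if_neg]
      intro hgn
      apply hf
      rw [ht g f (fun i hi hi' => (hfg i hi (by omega)).symm)]
      exact hgn
  · intro f
    have := detKer_sum hb f (fun _ => (1:ℝ))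
    simpa using this

lemma faR_det {s : Ω → ℕ} (hs : ValidS Y κ s) (hκ : 1 ≤ κ) :
    faR p Y S κ (detKer (extST Y κ s)) = ∑ ω, p ω * (if s ω < S ω then 1 else 0) := by
  rw [faR, exW]
  refine Finset.sum_congr rfl fun ω _ => ?_
  congr 1
  rw [detKer_sum (extST_bounds hs hκ) (pathOf Y ω) (fun n => if n < S ω then 1 else 0),
    extST_path hs]

lemma delayR_det {s : Ω → ℕ} (hs : ValidS Y κ s) (hκ : 1 ≤ κ) :
    delayR p Y S κ (detKer (extST Y κ s)) =
      ∑ ω, p ω * posP ((s ω : ℝ) - (S ω : ℝ)) := by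
  rw [delayR, exW]
  refine Finset.sum_congr rfl fun ω _ => ?_
  congr 1
  rw [detKer_sum (extST_bounds hs hκ) (pathOf Y ω) (fun n => posP ((n : ℝ) - (S ω : ℝ))),
    extST_path hs]

lemma faR_constκ (hκ : 1 ≤ κ) (hSb : ∀ ω, 1 ≤ S ω ∧ S ω ≤ κ) :
    faR p Y S κ (detKer (extST Y κ (fun _ : Ω => κ))) = 0 := by
  rw [faR_det p S (validS_const hκ hκ le_rfl) hκ]
  refine Finset.sum_eq_zero fun ω _ => ?_
  rw [if_neg (by have := (hSb ω).2; omega), mul_zero]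

lemma delayR_const1 (hκ : 1 ≤ κ) (hSb : ∀ ω, 1 ≤ S ω ∧ S ω ≤ κ) :
    delayR p Y S κ (detKer (extST Y κ (fun _ : Ω => 1))) = 0 := by
  rw [delayR_det p S (validS_const hκ le_rfl hκ) hκ]
  refine Finset.sum_eq_zero fun ω _ => ?_
  have h1 : ((1:ℕ) : ℝ) - (S ω : ℝ) ≤ 0 := by
    have h2 : (1:ℝ) ≤ (S ω : ℝ) := by exact_mod_cast (hSb ω).1
    push_cast
    linarith
  rw [posP, max_eq_right h1, mul_zero]

/-! ### Decomposition of a randomized stopping time into deterministic ones -/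

lemma decomp (hp : IsProbW p) (hκ : 1 ≤ κ) {q : ℕ → (ℕ → 𝒴) → ℝ} (hq : IsRandST q κ) :
    ∃ (w : ℕ → ℝ) (s : ℕ → Ω → ℕ) (m : ℕ),
      (∀ j ∈ Finset.range m, 0 ≤ w j) ∧ (∑ j ∈ Finset.range m, w j) = 1 ∧
      (∀ j ∈ Finset.range m, ValidS Y κ (s j)) ∧
      faR p Y S κ q =
        ∑ j ∈ Finset.range m, w j * faR p Y S κ (detKer (extST Y κ (s j))) ∧
      delayR p Y S κ q =
        ∑ j ∈ Finset.range m, w j * delayR p Y S κ (detKer (extST Y κ (s j))) := by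
  -- Ω is nonempty
  have hΩ : Nonempty Ω := by
    by_contra hcon
    rw [not_nonempty_iff] at hcon
    have := hp.2
    rw [Finset.univ_eq_empty, Finset.sum_empty] at this
    norm_num at this
  obtain ⟨ω₀⟩ := hΩ
  -- the cumulative distribution of q along each sample path
  set r : Ω → ℕ → ℝ := fun ω n => q n (pathOf Y ω) with hr
  set Fc : Ω → ℕ → ℝ := fun ω n => ∑ k ∈ Finset.Icc 1 n, r ω k with hFc
  have hFc0 : ∀ ω, Fc ω 0 = 0 := by intro ω; simp [hFc]
  have hFcκ : ∀ ω, Fc ω κ = 1 := fun ω => hq.2.2 (pathOf Y ω)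
  have hFcmono : ∀ ω {n n'}, n ≤ n' → Fc ω n ≤ Fc ω n' := by
    intro ω n n' hnn
    exact Finset.sum_le_sum_of_subset_of_nonneg
      (Finset.Icc_subset_Icc_right hnn) (fun k _ _ => hq.1 k (pathOf Y ω))
  have hFcnn : ∀ ω n, 0 ≤ Fc ω n := by
    intro ω n
    rw [← hFc0 ω]
    exact hFcmono ω (Nat.zero_le n)
  set C : Finset ℝ := (Finset.univ ×ˢ Finset.Icc 0 κ).image (fun z : Ω × ℕ => Fc z.1 z.2)
    with hC
  have hmemC : ∀ ω, ∀ n ≤ κ, Fc ω n ∈ C := by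
    intro ω n hn
    rw [hC, Finset.mem_image]
    exact ⟨(ω, n), by
      rw [Finset.mem_product]
      exact ⟨Finset.mem_univ _, Finset.mem_Icc.mpr ⟨Nat.zero_le _, hn⟩⟩, rfl⟩
  have h0C : (0:ℝ) ∈ C := by rw [← hFc0 ω₀]; exact hmemC ω₀ 0 (Nat.zero_le _)
  have h1C : (1:ℝ) ∈ C := by rw [← hFcκ ω₀]; exact hmemC ω₀ κ le_rfl
  have hCb : ∀ x ∈ C, 0 ≤ x ∧ x ≤ 1 := by
    intro x hx
    rw [hC, Finset.mem_image] at hx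
    obtain ⟨z, hz, rfl⟩ := hx
    rw [Finset.mem_product, Finset.mem_Icc] at hz
    exact ⟨hFcnn z.1 z.2, by rw [← hFcκ z.1]; exact hFcmono z.1 hz.2.2⟩
  set m := gridM C with hm
  set c := gridC C with hc
  set w : ℕ → ℝ := fun j => c (j + 1) - c j with hw
  set s : ℕ → Ω → ℕ := fun j ω => sInf {n | c (j + 1) ≤ Fc ω n} with hs
  -- basic facts for indices in range m
  have hcj : ∀ j ∈ Finset.range m, 0 < c (j + 1) ∧ c (j + 1) ≤ 1 :=
    fun j hj => grid_pos h0C h1C hCb hj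
  have hne : ∀ j ∈ Finset.range m, ∀ ω, ∃ n, n ∈ {n | c (j + 1) ≤ Fc ω n} :=
    fun j hj ω => ⟨κ, by rw [Set.mem_setOf_eq, hFcκ]; exact (hcj j hj).2⟩
  have hspec : ∀ j ∈ Finset.range m, ∀ ω, c (j + 1) ≤ Fc ω (s j ω) :=
    fun j hj ω => Nat.sInf_mem (Set.nonempty_def.mpr (hne j hj ω))
  have hmin : ∀ j ∈ Finset.range m, ∀ ω, ∀ k < s j ω, ¬ c (j + 1) ≤ Fc ω k :=
    fun j hj ω k hk => Nat.notMem_of_lt_sInf hk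
  have hsle : ∀ j ∈ Finset.range m, ∀ ω, s j ω ≤ κ :=
    fun j hj ω => Nat.sInf_le (by rw [Set.mem_setOf_eq, hFcκ]; exact (hcj j hj).2)
  have hsge : ∀ j ∈ Finset.range m, ∀ ω, 1 ≤ s j ω := by
    intro j hj ω
    by_contra hcon
    have h0 : s j ω = 0 := by omega
    have := hspec j hj ω
    rw [h0, hFc0] at this
    exact absurd this (not_le.mpr (hcj j hj).1)
  -- validity of each s j
  have hval : ∀ j ∈ Finset.range m, ValidS Y κ (s j) := by
    intro j hj
    refine ⟨fun ω => ⟨hsge j hj ω, hsle j hj ω⟩, ?_⟩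
    intro ω ω' hagree
    have hreq : ∀ n ≤ s j ω, Fc ω' n = Fc ω n := by
      intro n hn
      refine Finset.sum_congr rfl fun k hk => ?_
      rw [Finset.mem_Icc] at hk
      exact hq.2.1 k (pathOf Y ω) (pathOf Y ω') (fun i hi hi' =>
        hagree i hi (by omega))
    refine le_antisymm ?_ ?_
    · exact Nat.sInf_le (by
        rw [Set.mem_setOf_eq, hreq _ le_rfl]
        exact hspec j hj ω)
    · by_contra hcon
      rw [not_le] at hcon
      have h1 : c (j + 1) ≤ Fc ω' (s j ω') :=
        Nat.sInf_mem (Set.nonempty_def.mpr (hne j hj ω'))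
      rw [hreq _ (by omega)] at h1
      exact hmin j hj ω _ hcon h1
  -- the pointwise decomposition identity
  have key : ∀ ω, ∀ n ∈ Finset.Icc 1 κ,
      r ω n = ∑ j ∈ Finset.range m, w j * (if s j ω = n then 1 else 0) := by
    intro ω n hn
    rw [Finset.mem_Icc] at hn
    obtain ⟨k, rfl⟩ : ∃ k, n = k + 1 := ⟨n - 1, by omega⟩
    have e1 : ∀ j ∈ Finset.range m,
        w j * (if s j ω = k + 1 then 1 else 0) =
        (if Fc ω k < c (j + 1) ∧ c (j + 1) ≤ Fc ω (k + 1) then c (j + 1) - c j else 0) := by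
      intro j hj
      have hiff : s j ω = k + 1 ↔ Fc ω k < c (j + 1) ∧ c (j + 1) ≤ Fc ω (k + 1) := by
        constructor
        · intro he
          constructor
          · exact not_le.mp (hmin j hj ω k (by omega))
          · rw [← he]; exact hspec j hj ω
        · rintro ⟨h1, h2⟩
          refine le_antisymm (Nat.sInf_le h2) ?_
          by_contra hcon
          rw [not_le] at hcon
          have h3 : c (j + 1) ≤ Fc ω (s j ω) :=
            Nat.sInf_mem (Set.nonempty_def.mpr (hne j hj ω))
          have h4 : Fc ω (s j ω) ≤ Fc ω k := hFcmono ω (by omega)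
          linarith
      rw [hw]
      by_cases hcase : s j ω = k + 1
      · rw [if_pos hcase, if_pos (hiff.mp hcase), mul_one]
      · rw [if_neg hcase, if_neg (fun hcc => hcase (hiff.mpr hcc)), mul_zero]
    rw [Finset.sum_congr rfl e1, hc,
      grid_key (hmemC ω k (by omega)) (hmemC ω (k + 1) (by omega)) (hFcmono ω (by omega))]
    have : Fc ω (k + 1) = Fc ω k + r ω (k + 1) := Finset.sum_Icc_succ_top (by omega) _
    rw [this]
    ring
  -- pushing sums around
  have push : ∀ (A : ℕ → Ω → ℝ),
      ∑ ω, p ω * ∑ j ∈ Finset.range m, w j * A j ω =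
      ∑ j ∈ Finset.range m, w j * ∑ ω, p ω * A j ω := by
    intro A
    calc ∑ ω, p ω * ∑ j ∈ Finset.range m, w j * A j ω
        = ∑ ω, ∑ j ∈ Finset.range m, p ω * (w j * A j ω) := by
          exact Finset.sum_congr rfl fun ω _ => Finset.mul_sum _ _ _
      _ = ∑ j ∈ Finset.range m, ∑ ω, p ω * (w j * A j ω) := Finset.sum_comm
      _ = ∑ j ∈ Finset.range m, w j * ∑ ω, p ω * A j ω := by
          refine Finset.sum_congr rfl fun j _ => ?_
          rw [Finset.mul_sum]
          exact Finset.sum_congr rfl fun ω _ => by ring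
  -- the master expansion
  have exp : ∀ (g : ℕ → Ω → ℝ),
      ∑ ω, p ω * ∑ n ∈ Finset.Icc 1 κ, q n (pathOf Y ω) * g n ω =
      ∑ j ∈ Finset.range m, w j *
        ∑ ω, p ω * ∑ n ∈ Finset.Icc 1 κ, detKer (extST Y κ (s j)) n (pathOf Y ω) * g n ω := by
    intro g
    have L1 : ∀ ω, ∑ n ∈ Finset.Icc 1 κ, q n (pathOf Y ω) * g n ω =
        ∑ j ∈ Finset.range m, w j *
          ∑ n ∈ Finset.Icc 1 κ, (if s j ω = n then (1:ℝ) else 0) * g n ω := by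
      intro ω
      calc ∑ n ∈ Finset.Icc 1 κ, q n (pathOf Y ω) * g n ω
          = ∑ n ∈ Finset.Icc 1 κ,
              (∑ j ∈ Finset.range m, w j * (if s j ω = n then 1 else 0)) * g n ω := by
            exact Finset.sum_congr rfl fun n hn => by rw [← key ω n hn]
        _ = ∑ n ∈ Finset.Icc 1 κ, ∑ j ∈ Finset.range m,
              w j * ((if s j ω = n then (1:ℝ) else 0) * g n ω) := by
            refine Finset.sum_congr rfl fun n _ => ?_
            rw [Finset.sum_mul]
            exact Finset.sum_congr rfl fun j _ => by ring
        _ = ∑ j ∈ Finset.range m, ∑ n ∈ Finset.Icc 1 κ,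
              w j * ((if s j ω = n then (1:ℝ) else 0) * g n ω) := Finset.sum_comm
        _ = ∑ j ∈ Finset.range m, w j *
              ∑ n ∈ Finset.Icc 1 κ, (if s j ω = n then (1:ℝ) else 0) * g n ω := by
            exact Finset.sum_congr rfl fun j _ => (Finset.mul_sum _ _ _).symm
    calc ∑ ω, p ω * ∑ n ∈ Finset.Icc 1 κ, q n (pathOf Y ω) * g n ω
        = ∑ ω, p ω * ∑ j ∈ Finset.range m, w j *
            ∑ n ∈ Finset.Icc 1 κ, (if s j ω = n then (1:ℝ) else 0) * g n ω := by
          exact Finset.sum_congr rfl fun ω _ => by rw [L1]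
      _ = ∑ j ∈ Finset.range m, w j * ∑ ω, p ω *
            ∑ n ∈ Finset.Icc 1 κ, (if s j ω = n then (1:ℝ) else 0) * g n ω := push _
      _ = ∑ j ∈ Finset.range m, w j *
            ∑ ω, p ω * ∑ n ∈ Finset.Icc 1 κ,
              detKer (extST Y κ (s j)) n (pathOf Y ω) * g n ω := by
          refine Finset.sum_congr rfl fun j hj => ?_
          congr 1
          refine Finset.sum_congr rfl fun ω _ => ?_
          congr 1
          refine Finset.sum_congr rfl fun n _ => ?_
          rw [detKer, extST_path (hval j hj)]
  refine ⟨w, s, m, fun j hj => grid_wnonneg hj, grid_wsum h0C h1C hCb, hval, ?_, ?_⟩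
  · exact exp (fun n ω => if n < S ω then 1 else 0)
  · exact exp (fun n ω => posP ((n : ℝ) - (S ω : ℝ)))

/-! ### Basic bounds -/

lemma faR_nonneg (hp : IsProbW p) {q : ℕ → (ℕ → 𝒴) → ℝ} (hq : IsRandST q κ) :
    0 ≤ faR p Y S κ q := by
  rw [faR, exW]
  refine Finset.sum_nonneg fun ω _ => mul_nonneg (hp.1 ω) (Finset.sum_nonneg fun n _ =>
    mul_nonneg (hq.1 n _) (by positivity))

lemma faR_le_one (hp : IsProbW p) {q : ℕ → (ℕ → 𝒴) → ℝ} (hq : IsRandST q κ) :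
    faR p Y S κ q ≤ 1 := by
  rw [faR, exW]
  have h1 : ∀ ω, ∑ n ∈ Finset.Icc 1 κ, q n (pathOf Y ω) * (if n < S ω then (1:ℝ) else 0)
      ≤ 1 := by
    intro ω
    calc ∑ n ∈ Finset.Icc 1 κ, q n (pathOf Y ω) * (if n < S ω then (1:ℝ) else 0)
        ≤ ∑ n ∈ Finset.Icc 1 κ, q n (pathOf Y ω) := by
          refine Finset.sum_le_sum fun n _ => ?_
          have := hq.1 n (pathOf Y ω)
          split <;> simp <;> linarith
      _ = 1 := hq.2.2 _
  calc ∑ ω, p ω * ∑ n ∈ Finset.Icc 1 κ, q n (pathOf Y ω) * (if n < S ω then (1:ℝ) else 0)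
      ≤ ∑ ω, p ω * 1 := Finset.sum_le_sum fun ω _ =>
        mul_le_mul_of_nonneg_left (h1 ω) (hp.1 ω)
    _ = 1 := by simp only [mul_one]; exact hp.2

lemma delayR_nonneg (hp : IsProbW p) {q : ℕ → (ℕ → 𝒴) → ℝ} (hq : IsRandST q κ) :
    0 ≤ delayR p Y S κ q := by
  rw [delayR, exW]
  refine Finset.sum_nonneg fun ω _ => mul_nonneg (hp.1 ω) (Finset.sum_nonneg fun n _ =>
    mul_nonneg (hq.1 n _) (le_max_right _ _))

/-! ### Linearity of `faR` and `delayR` in the kernel -/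

lemma exp_sum {ι : Type*} (t : Finset ι) (w : ι → ℝ) (qi : ι → ℕ → (ℕ → 𝒴) → ℝ)
    (g : ℕ → Ω → ℝ) :
    ∑ ω, p ω * ∑ n ∈ Finset.Icc 1 κ, (∑ i ∈ t, w i * qi i n (pathOf Y ω)) * g n ω =
    ∑ i ∈ t, w i * ∑ ω, p ω * ∑ n ∈ Finset.Icc 1 κ, qi i n (pathOf Y ω) * g n ω := by
  calc ∑ ω, p ω * ∑ n ∈ Finset.Icc 1 κ, (∑ i ∈ t, w i * qi i n (pathOf Y ω)) * g n ω
      = ∑ ω, ∑ i ∈ t, p ω * (w i * ∑ n ∈ Finset.Icc 1 κ, qi i n (pathOf Y ω) * g n ω) := by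
        refine Finset.sum_congr rfl fun ω _ => ?_
        rw [← Finset.mul_sum]
        congr 1
        calc ∑ n ∈ Finset.Icc 1 κ, (∑ i ∈ t, w i * qi i n (pathOf Y ω)) * g n ω
            = ∑ n ∈ Finset.Icc 1 κ, ∑ i ∈ t, w i * (qi i n (pathOf Y ω) * g n ω) := by
              refine Finset.sum_congr rfl fun n _ => ?_
              rw [Finset.sum_mul]
              exact Finset.sum_congr rfl fun i _ => by ring
          _ = ∑ i ∈ t, ∑ n ∈ Finset.Icc 1 κ, w i * (qi i n (pathOf Y ω) * g n ω) :=
              Finset.sum_comm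
          _ = ∑ i ∈ t, w i * ∑ n ∈ Finset.Icc 1 κ, qi i n (pathOf Y ω) * g n ω := by
              exact Finset.sum_congr rfl fun i _ => (Finset.mul_sum _ _ _).symm
    _ = ∑ i ∈ t, ∑ ω, p ω * (w i * ∑ n ∈ Finset.Icc 1 κ, qi i n (pathOf Y ω) * g n ω) :=
        Finset.sum_comm
    _ = ∑ i ∈ t, w i * ∑ ω, p ω * ∑ n ∈ Finset.Icc 1 κ, qi i n (pathOf Y ω) * g n ω := by
        refine Finset.sum_congr rfl fun i _ => ?_
        rw [Finset.mul_sum]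
        exact Finset.sum_congr rfl fun ω _ => by ring

lemma faR_sum {ι : Type*} (t : Finset ι) (w : ι → ℝ) (qi : ι → ℕ → (ℕ → 𝒴) → ℝ) :
    faR p Y S κ (fun n f => ∑ i ∈ t, w i * qi i n f) =
      ∑ i ∈ t, w i * faR p Y S κ (qi i) := by
  simp only [faR, exW]
  exact exp_sum (p := p) (t := t) (w := w) (qi := qi) (g := fun n ω => if n < S ω then 1 else 0)

lemma delayR_sum {ι : Type*} (t : Finset ι) (w : ι → ℝ) (qi : ι → ℕ → (ℕ → 𝒴) → ℝ) :
    delayR p Y S κ (fun n f => ∑ i ∈ t, w i * qi i n f) =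
      ∑ i ∈ t, w i * delayR p Y S κ (qi i) := by
  simp only [delayR, exW]
  exact exp_sum (p := p) (t := t) (w := w) (qi := qi)
    (g := fun n ω => posP ((n : ℝ) - (S ω : ℝ)))

lemma randST_sum {ι : Type*} (t : Finset ι) (w : ι → ℝ) (qi : ι → ℕ → (ℕ → 𝒴) → ℝ)
    (hw : ∀ i ∈ t, 0 ≤ w i) (hws : ∑ i ∈ t, w i = 1)
    (hqi : ∀ i ∈ t, IsRandST (qi i) κ) :
    IsRandST (fun n f => ∑ i ∈ t, w i * qi i n f) κ := by
  refine ⟨fun n f => Finset.sum_nonneg fun i hi => mul_nonneg (hw i hi) ((hqi i hi).1 n f),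
    ?_, ?_⟩
  · intro n f g hfg
    exact Finset.sum_congr rfl fun i hi => by rw [(hqi i hi).2.1 n f g hfg]
  · intro f
    rw [Finset.sum_comm]
    calc ∑ i ∈ t, ∑ n ∈ Finset.Icc 1 κ, w i * qi i n f
        = ∑ i ∈ t, w i * ∑ n ∈ Finset.Icc 1 κ, qi i n f := by
          exact Finset.sum_congr rfl fun i _ => (Finset.mul_sum _ _ _).symm
      _ = ∑ i ∈ t, w i := by
          refine Finset.sum_congr rfl fun i hi => by rw [(hqi i hi).2.2 f, mul_one]
      _ = 1 := hws

/-! ### The set of deterministic points -/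

/-- the achieved (false alarm, delay) point of a deterministic stopping time -/
def ptOf (p : Ω → ℝ) (Y : ℕ → Ω → 𝒴) (S : Ω → ℕ) (κ : ℕ) (s : Ω → ℕ) : ℝ × ℝ :=
  (faR p Y S κ (detKer (extST Y κ s)), delayR p Y S κ (detKer (extST Y κ s)))

/-- the finite set of all points achieved by deterministic stopping times -/
def DD (p : Ω → ℝ) (Y : ℕ → Ω → 𝒴) (S : Ω → ℕ) (κ : ℕ) : Finset (ℝ × ℝ) :=
  (Finset.univ : Finset (Ω → Fin (κ + 1))).image fun σ =>
    if ValidS Y κ (fun ω => (σ ω : ℕ)) then ptOf p Y S κ (fun ω => (σ ω : ℕ))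
    else ptOf p Y S κ (fun _ => κ)

lemma DD_elim (hκ : 1 ≤ κ) {z : ℝ × ℝ} (hz : z ∈ DD p Y S κ) :
    ∃ s, ValidS Y κ s ∧ ptOf p Y S κ s = z := by
  rw [DD, Finset.mem_image] at hz
  obtain ⟨σ, -, rfl⟩ := hz
  by_cases h : ValidS Y κ (fun ω => (σ ω : ℕ))
  · exact ⟨_, h, by rw [if_pos h]⟩
  · exact ⟨fun _ => κ, validS_const hκ hκ le_rfl, by rw [if_neg h]⟩

lemma DD_intro {s : Ω → ℕ} (hs : ValidS Y κ s) : ptOf p Y S κ s ∈ DD p Y S κ := by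
  rw [DD, Finset.mem_image]
  refine ⟨fun ω => ⟨s ω, by have := (hs.1 ω).2; omega⟩, Finset.mem_univ _, ?_⟩
  have he : (fun ω => ((⟨s ω, by have := (hs.1 ω).2; omega⟩ : Fin (κ + 1)) : ℕ)) = s :=
    funext fun ω => rfl
  rw [he, if_pos hs]

/-! ### The feasible value set -/

def Vset (p : Ω → ℝ) (Y : ℕ → Ω → 𝒴) (S : Ω → ℕ) (κ : ℕ) (α : ℝ) : Set ℝ :=
  {v | ∃ q, IsRandST q κ ∧ faR p Y S κ q ≤ α ∧ v = delayR p Y S κ q}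

lemma dW_eq_sInf (α : ℝ) : dW p Y S κ α = sInf (Vset p Y S κ α) := rfl

lemma V_nonempty (hκ : 1 ≤ κ) (hSb : ∀ ω, 1 ≤ S ω ∧ S ω ≤ κ) {α : ℝ} (hα : 0 ≤ α) :
    (Vset p Y S κ α).Nonempty := by
  refine ⟨delayR p Y S κ (detKer (extST Y κ (fun _ => κ))), _,
    detKer_randST (extST_stopFun (validS_const hκ hκ le_rfl))
      (extST_bounds (validS_const hκ hκ le_rfl) hκ), ?_, rfl⟩
  rw [faR_constκ p S hκ hSb]
  exact hα

lemma V_bdd (hp : IsProbW p) (α : ℝ) : BddBelow (Vset p Y S κ α) := by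
  refine ⟨0, fun v hv => ?_⟩
  obtain ⟨q, hq, -, rfl⟩ := hv
  exact delayR_nonneg p S hp hq

lemma dW_nonneg (hp : IsProbW p) (hκ : 1 ≤ κ) (hSb : ∀ ω, 1 ≤ S ω ∧ S ω ≤ κ)
    {α : ℝ} (hα : 0 ≤ α) : 0 ≤ dW p Y S κ α := by
  rw [dW_eq_sInf]
  refine le_csInf (V_nonempty p S hκ hSb hα) fun v hv => ?_
  obtain ⟨q, hq, -, rfl⟩ := hv
  exact delayR_nonneg p S hp hq

lemma dW_mono (hp : IsProbW p) (hκ : 1 ≤ κ) (hSb : ∀ ω, 1 ≤ S ω ∧ S ω ≤ κ)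
    {α α' : ℝ} (hα : 0 ≤ α) (hαα : α ≤ α') : dW p Y S κ α' ≤ dW p Y S κ α := by
  rw [dW_eq_sInf, dW_eq_sInf]
  refine csInf_le_csInf (V_bdd p S hp α') (V_nonempty p S hκ hSb hα) ?_
  rintro v ⟨q, hq, hfa, rfl⟩
  exact ⟨q, hq, le_trans hfa hαα, rfl⟩

lemma dW_le (hp : IsProbW p) {α v : ℝ} (hv : v ∈ Vset p Y S κ α) :
    dW p Y S κ α ≤ v := by
  rw [dW_eq_sInf]
  exact csInf_le (V_bdd p S hp α) hv

/-! ### The achievable set is the convex hull of deterministic points -/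

lemma point_mem_hull (hp : IsProbW p) (hκ : 1 ≤ κ) {q : ℕ → (ℕ → 𝒴) → ℝ}
    (hq : IsRandST q κ) :
    (faR p Y S κ q, delayR p Y S κ q) ∈ convexHull ℝ (↑(DD p Y S κ) : Set (ℝ × ℝ)) := by
  obtain ⟨w, s, m, hw0, hw1, hval, hfa, hde⟩ := decomp p S hp hκ hq
  have heq : (faR p Y S κ q, delayR p Y S κ q) =
      (Finset.range m).centerMass w (fun j => ptOf p Y S κ (s j)) := by
    rw [Finset.centerMass_eq_of_sum_1 _ _ hw1]
    apply Prod.ext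
    · rw [Prod.fst_sum]
      simpa [ptOf] using hfa
    · rw [Prod.snd_sum]
      simpa [ptOf] using hde
  rw [heq]
  exact Finset.centerMass_mem_convexHull _ hw0 (by rw [hw1]; norm_num)
    (fun j hj => DD_intro p S (hval j hj))

lemma hull_point_achievable (hκ : 1 ≤ κ) {x : ℝ × ℝ}
    (hx : x ∈ convexHull ℝ (↑(DD p Y S κ) : Set (ℝ × ℝ))) :
    ∃ q, IsRandST q κ ∧ faR p Y S κ q = x.1 ∧ delayR p Y S κ q = x.2 := by
  rw [Finset.convexHull_eq] at hx
  obtain ⟨wgt, hw0, hw1, hcm⟩ := hx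
  set qz : ℝ × ℝ → ℕ → (ℕ → 𝒴) → ℝ := fun z =>
    if h : ∃ s, ValidS Y κ s ∧ ptOf p Y S κ s = z then detKer (extST Y κ h.choose)
    else detKer (extST Y κ (fun _ => κ)) with hqz
  have hzprop : ∀ z ∈ DD p Y S κ, IsRandST (qz z) κ ∧
      faR p Y S κ (qz z) = z.1 ∧ delayR p Y S κ (qz z) = z.2 := by
    intro z hz
    have h : ∃ s, ValidS Y κ s ∧ ptOf p Y S κ s = z := DD_elim p S hκ hz
    have hch := h.choose_spec
    rw [hqz]
    simp only [dif_pos h]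
    refine ⟨detKer_randST (extST_stopFun hch.1) (extST_bounds hch.1 hκ), ?_, ?_⟩
    · rw [show z.1 = (ptOf p Y S κ h.choose).1 from by rw [hch.2]]; rfl
    · rw [show z.2 = (ptOf p Y S κ h.choose).2 from by rw [hch.2]]; rfl
  refine ⟨fun n f => ∑ z ∈ DD p Y S κ, wgt z * qz z n f,
    randST_sum _ _ _ hw0 hw1 (fun z hz => (hzprop z hz).1), ?_, ?_⟩
  · rw [faR_sum]
    have : ∑ z ∈ DD p Y S κ, wgt z * faR p Y S κ (qz z) =
        ∑ z ∈ DD p Y S κ, wgt z * z.1 := by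
      exact Finset.sum_congr rfl fun z hz => by rw [(hzprop z hz).2.1]
    rw [this, ← hcm, Finset.centerMass_eq_of_sum_1 _ _ hw1, Prod.fst_sum]
    rfl
  · rw [delayR_sum]
    have : ∑ z ∈ DD p Y S κ, wgt z * delayR p Y S κ (qz z) =
        ∑ z ∈ DD p Y S κ, wgt z * z.2 := by
      exact Finset.sum_congr rfl fun z hz => by rw [(hzprop z hz).2.2]
    rw [this, ← hcm, Finset.centerMass_eq_of_sum_1 _ _ hw1, Prod.snd_sum]
    rfl

lemma dW_attained (hp : IsProbW p) (hκ : 1 ≤ κ) (hSb : ∀ ω, 1 ≤ S ω ∧ S ω ≤ κ)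
    {α : ℝ} (hα : 0 ≤ α) :
    ∃ x ∈ convexHull ℝ (↑(DD p Y S κ) : Set (ℝ × ℝ)),
      x.1 ≤ α ∧ dW p Y S κ α = x.2 ∧
      ∀ y ∈ convexHull ℝ (↑(DD p Y S κ) : Set (ℝ × ℝ)), y.1 ≤ α → x.2 ≤ y.2 := by
  set K := convexHull ℝ (↑(DD p Y S κ) : Set (ℝ × ℝ)) ∩ {z : ℝ × ℝ | z.1 ≤ α} with hK
  have hKc : IsCompact K :=
    ((DD p Y S κ).finite_toSet.isCompact_convexHull ℝ).inter_right
      (isClosed_le continuous_fst continuous_const)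
  have hKne : K.Nonempty := by
    refine ⟨ptOf p Y S κ (fun _ => κ), subset_convexHull ℝ _
      (DD_intro p S (validS_const hκ hκ le_rfl)), ?_⟩
    rw [Set.mem_setOf_eq]
    show faR p Y S κ (detKer (extST Y κ (fun _ => κ))) ≤ α
    rw [faR_constκ p S hκ hSb]
    exact hα
  obtain ⟨x, hxK, hxmin⟩ := hKc.exists_isMinOn hKne continuous_snd.continuousOn
  refine ⟨x, hxK.1, hxK.2, ?_, fun y hy hy1 => hxmin (Set.mem_inter hy hy1)⟩
  refine le_antisymm ?_ ?_
  · obtain ⟨q, hq, hfa, hde⟩ := hull_point_achievable p S hκ hxK.1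
    exact hde ▸ dW_le p S hp ⟨q, hq, hfa ▸ hxK.2, rfl⟩
  · rw [dW_eq_sInf]
    refine le_csInf (V_nonempty p S hκ hSb hα) ?_
    rintro v ⟨q, hq, hfa, rfl⟩
    exact hxmin (Set.mem_inter (point_mem_hull p S hp hκ hq) hfa)

/-! ### Convexity of `dW` -/

lemma dW_convexOn (hp : IsProbW p) (hκ : 1 ≤ κ) (hSb : ∀ ω, 1 ≤ S ω ∧ S ω ≤ κ) :
    ConvexOn ℝ (Set.Icc (0:ℝ) 1) (dW p Y S κ) := by
  refine ⟨convex_Icc 0 1, ?_⟩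
  intro x hx y hy a b ha hb hab
  simp only [smul_eq_mul]
  refine le_of_forall_pos_le_add fun ε hε => ?_
  have hxv : ∃ v ∈ Vset p Y S κ x, v < dW p Y S κ x + ε := by
    have h2 : dW p Y S κ x < dW p Y S κ x + ε := by linarith
    rw [dW_eq_sInf] at h2
    exact exists_lt_of_csInf_lt (V_nonempty p S hκ hSb hx.1) h2
  have hyv : ∃ v ∈ Vset p Y S κ y, v < dW p Y S κ y + ε := by
    have h2 : dW p Y S κ y < dW p Y S κ y + ε := by linarith
    rw [dW_eq_sInf] at h2
    exact exists_lt_of_csInf_lt (V_nonempty p S hκ hSb hy.1) h2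
  obtain ⟨v1, ⟨q1, hq1, hfa1, rfl⟩, hv1⟩ := hxv
  obtain ⟨v2, ⟨q2, hq2, hfa2, rfl⟩, hv2⟩ := hyv
  set t : Finset ℕ := {0, 1} with ht
  set w : ℕ → ℝ := fun i => if i = 0 then a else b with hw
  set qi : ℕ → ℕ → (ℕ → 𝒴) → ℝ := fun i => if i = 0 then q1 else q2 with hqi
  have hws : ∑ i ∈ t, w i = 1 := by rw [ht, hw]; simp; exact hab
  have hmix : IsRandST (fun n f => ∑ i ∈ t, w i * qi i n f) κ := by
    refine randST_sum _ _ _ ?_ hws ?_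
    · intro i hi
      by_cases h0 : i = 0 <;> simp [hw, h0, ha, hb]
    · intro i hi
      by_cases h0 : i = 0 <;> simp [hqi, h0, hq1, hq2]
  have hfam : faR p Y S κ (fun n f => ∑ i ∈ t, w i * qi i n f) = a * faR p Y S κ q1 +
      b * faR p Y S κ q2 := by
    rw [faR_sum, ht]
    simp [hw, hqi]
  have hdem : delayR p Y S κ (fun n f => ∑ i ∈ t, w i * qi i n f) =
      a * delayR p Y S κ q1 + b * delayR p Y S κ q2 := by
    rw [delayR_sum, ht]
    simp [hw, hqi]
  have hle : dW p Y S κ (a * x + b * y) ≤ a * delayR p Y S κ q1 + b * delayR p Y S κ q2 := by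
    refine dW_le p S hp ⟨_, hmix, ?_, hdem.symm⟩
    rw [hfam]
    exact add_le_add (mul_le_mul_of_nonneg_left hfa1 ha) (mul_le_mul_of_nonneg_left hfa2 hb)
  have h1 : 0 ≤ dW p Y S κ x + ε - delayR p Y S κ q1 := by linarith
  have h2 : 0 ≤ dW p Y S κ y + ε - delayR p Y S κ q2 := by linarith
  nlinarith [mul_le_mul_of_nonneg_left (le_of_lt hv1) ha,
    mul_le_mul_of_nonneg_left (le_of_lt hv2) hb]

/-! ### Properties of deterministic points and the final slice formula -/

lemma DD_props (hp : IsProbW p) (hκ : 1 ≤ κ) {z : ℝ × ℝ} (hz : z ∈ DD p Y S κ) :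
    0 ≤ z.1 ∧ z.1 ≤ 1 ∧ 0 ≤ z.2 ∧ dW p Y S κ z.1 ≤ z.2 := by
  obtain ⟨s, hs, rfl⟩ := DD_elim p S hκ hz
  have hrand : IsRandST (detKer (extST Y κ s)) κ :=
    detKer_randST (extST_stopFun hs) (extST_bounds hs hκ)
  exact ⟨faR_nonneg p S hp hrand, faR_le_one p S hp hrand, delayR_nonneg p S hp hrand,
    dW_le p S hp ⟨_, hrand, le_rfl, rfl⟩⟩

lemma main_slice (hp : IsProbW p) (hκ : 1 ≤ κ) (hSb : ∀ ω, 1 ≤ S ω ∧ S ω ≤ κ)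
    {α : ℝ} (hα : α ∈ Set.Icc (0:ℝ) 1) :
    dW p Y S κ α = sInf {c | (α, c) ∈ convexHull ℝ
      (↑((DD p Y S κ).filter fun z => dW p Y S κ z.1 = z.2) : Set (ℝ × ℝ))} := by
  set F := (DD p Y S κ).filter (fun z => dW p Y S κ z.1 = z.2) with hF
  have hconv : ConvexOn ℝ (Set.Icc (0:ℝ) 1) (dW p Y S κ) := dW_convexOn p S hp hκ hSb
  have hFprops : ∀ z ∈ F, (0 ≤ z.1 ∧ z.1 ≤ 1 ∧ 0 ≤ z.2 ∧ dW p Y S κ z.1 ≤ z.2)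
      ∧ dW p Y S κ z.1 = z.2 := by
    intro z hz
    rw [hF, Finset.mem_filter] at hz
    exact ⟨DD_props p S hp hκ hz.1, hz.2⟩
  -- any point of a slice of the hull of F lies above the curve
  have slice_ge : ∀ γ c : ℝ, (γ, c) ∈ convexHull ℝ (↑F : Set (ℝ × ℝ)) →
      dW p Y S κ γ ≤ c := by
    intro γ c hc
    rw [Finset.convexHull_eq] at hc
    obtain ⟨wgt, hw0, hw1, hcm⟩ := hc
    have hsum : ∑ z ∈ F, wgt z • z = (γ, c) := by
      rw [Finset.centerMass_eq_of_sum_1 _ id hw1] at hcm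
      simpa using hcm
    have hfst : ∑ z ∈ F, wgt z * z.1 = γ := by
      have := congrArg Prod.fst hsum
      rw [Prod.fst_sum] at this
      simpa [smul_eq_mul] using this
    have hsnd : ∑ z ∈ F, wgt z * z.2 = c := by
      have := congrArg Prod.snd hsum
      rw [Prod.snd_sum] at this
      simpa [smul_eq_mul] using this
    have hJ := hconv.map_centerMass_le hw0 (by rw [hw1]; exact one_pos)
      (p := fun z : ℝ × ℝ => z.1)
      (fun z hz => Set.mem_Icc.mpr ⟨(hFprops z hz).1.1, (hFprops z hz).1.2.1⟩)
    rw [Finset.centerMass_eq_of_sum_1 _ _ hw1, Finset.centerMass_eq_of_sum_1 _ _ hw1] at hJ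
    simp only [smul_eq_mul, Function.comp] at hJ
    rw [hfst] at hJ
    calc dW p Y S κ γ ≤ ∑ z ∈ F, wgt z * dW p Y S κ z.1 := hJ
      _ = ∑ z ∈ F, wgt z * z.2 :=
          Finset.sum_congr rfl fun z hz => by rw [(hFprops z hz).2]
      _ = c := hsnd
  have hbdd : BddBelow {c | (α, c) ∈ convexHull ℝ (↑F : Set (ℝ × ℝ))} :=
    ⟨dW p Y S κ α, fun c hc => slice_ge α c hc⟩
  -- the point of F achieved by stopping at time one
  have hs1 : ValidS Y κ (fun _ : Ω => 1) := validS_const hκ le_rfl hκ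
  have hrand1 : IsRandST (detKer (extST Y κ (fun _ : Ω => 1))) κ :=
    detKer_randST (extST_stopFun hs1) (extST_bounds hs1 hκ)
  set β₁ := faR p Y S κ (detKer (extST Y κ (fun _ : Ω => 1))) with hβ₁
  have hd1 : delayR p Y S κ (detKer (extST Y κ (fun _ : Ω => 1))) = 0 :=
    delayR_const1 p S hκ hSb
  have hβ0 : 0 ≤ β₁ := faR_nonneg p S hp hrand1
  have hdβ : dW p Y S κ β₁ = 0 :=
    le_antisymm (dW_le p S hp ⟨_, hrand1, le_rfl, hd1.symm⟩)
      (dW_nonneg p S hp hκ hSb hβ0)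
  have hptF : (β₁, (0:ℝ)) ∈ F := by
    rw [hF, Finset.mem_filter]
    constructor
    · have h1 : ptOf p Y S κ (fun _ : Ω => 1) = (β₁, 0) := by rw [ptOf, hd1]
      exact h1 ▸ DD_intro p S hs1
    · simpa using hdβ
  have hβF : ((β₁, (0:ℝ)) : ℝ × ℝ) ∈ convexHull ℝ (↑F : Set (ℝ × ℝ)) :=
    subset_convexHull ℝ _ hptF
  rcases le_or_gt α β₁ with hαβ | hβα
  · -- the nontrivial part of the curve
    obtain ⟨x, hxhull, hx1, hxd, hxmin⟩ := dW_attained p S hp hκ hSb hα.1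
    rw [Finset.convexHull_eq] at hxhull
    obtain ⟨wgt, hw0, hw1, hcm⟩ := hxhull
    have hsum : ∑ z ∈ DD p Y S κ, wgt z • z = x := by
      rw [Finset.centerMass_eq_of_sum_1 _ id hw1] at hcm
      simpa using hcm
    have hfst : ∑ z ∈ DD p Y S κ, wgt z * z.1 = x.1 := by
      have := congrArg Prod.fst hsum
      rw [Prod.fst_sum] at this
      simpa [smul_eq_mul] using this
    have hsnd : ∑ z ∈ DD p Y S κ, wgt z * z.2 = x.2 := by
      have := congrArg Prod.snd hsum
      rw [Prod.snd_sum] at this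
      simpa [smul_eq_mul] using this
    have hx1nn : 0 ≤ x.1 := by
      rw [← hfst]
      exact Finset.sum_nonneg fun z hz =>
        mul_nonneg (hw0 z hz) (DD_props p S hp hκ hz).1
    -- Jensen on the representation of x
    have hJ := hconv.map_centerMass_le hw0 (by rw [hw1]; exact one_pos)
      (p := fun z : ℝ × ℝ => z.1)
      (fun z hz => Set.mem_Icc.mpr ⟨(DD_props p S hp hκ hz).1, (DD_props p S hp hκ hz).2.1⟩)
    rw [Finset.centerMass_eq_of_sum_1 _ _ hw1, Finset.centerMass_eq_of_sum_1 _ _ hw1] at hJ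
    simp only [smul_eq_mul, Function.comp] at hJ
    rw [hfst] at hJ
    have e1 : ∀ z ∈ DD p Y S κ, wgt z * dW p Y S κ z.1 ≤ wgt z * z.2 :=
      fun z hz => mul_le_mul_of_nonneg_left (DD_props p S hp hκ hz).2.2.2 (hw0 z hz)
    have e4 : dW p Y S κ α ≤ dW p Y S κ x.1 := dW_mono p S hp hκ hSb hx1nn hx1
    have heqsum : ∑ z ∈ DD p Y S κ, wgt z * dW p Y S κ z.1 =
        ∑ z ∈ DD p Y S κ, wgt z * z.2 := by
      have hle := Finset.sum_le_sum e1
      have : ∑ z ∈ DD p Y S κ, wgt z * z.2 ≤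
          ∑ z ∈ DD p Y S κ, wgt z * dW p Y S κ z.1 := by
        rw [hsnd, ← hxd]
        linarith
      linarith
    have heach := (Finset.sum_eq_sum_iff_of_le e1).mp heqsum
    have hzF : ∀ z ∈ DD p Y S κ, wgt z ≠ 0 → z ∈ F := by
      intro z hz hz0
      rw [hF, Finset.mem_filter]
      exact ⟨hz, mul_left_cancel₀ hz0 (heach z hz)⟩
    -- x lies in the hull of F
    have hxF : x ∈ convexHull ℝ (↑F : Set (ℝ × ℝ)) := by
      have hw1' : ∑ z ∈ (DD p Y S κ).filter (fun z => wgt z ≠ 0), wgt z = 1 := by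
        rw [Finset.sum_filter_of_ne (fun z _ hz0 => hz0), hw1]
      have hsum' : ∑ z ∈ (DD p Y S κ).filter (fun z => wgt z ≠ 0), wgt z • z = x := by
        rw [Finset.sum_filter_of_ne (fun z _ hz0 => by
          intro hw
          rw [hw, zero_smul] at hz0
          exact hz0 rfl), hsum]
      have hcm' : ((DD p Y S κ).filter (fun z => wgt z ≠ 0)).centerMass wgt id = x := by
        rw [Finset.centerMass_eq_of_sum_1 _ id hw1']
        simpa using hsum'
      rw [← hcm']
      refine Finset.centerMass_mem_convexHull _
        (fun z hz => hw0 z (Finset.mem_filter.mp hz).1) (by rw [hw1']; exact one_pos) ?_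
      intro z hz
      rw [Finset.mem_filter] at hz
      exact hzF z hz.1 hz.2
    by_cases hcase : x.1 = α
    · have hmemd : dW p Y S κ α ∈ {c | (α, c) ∈ convexHull ℝ (↑F : Set (ℝ × ℝ))} := by
        rw [Set.mem_setOf_eq, hxd, ← hcase, Prod.mk.eta]
        exact hxF
      exact le_antisymm (le_csInf ⟨_, hmemd⟩ fun c hc => slice_ge α c hc)
        (csInf_le hbdd hmemd)
    · have hxlt : x.1 < α := lt_of_le_of_ne hx1 hcase
      have hxβ : x.1 < β₁ := lt_of_lt_of_le hxlt hαβ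
      set θ : ℝ := (β₁ - α) / (β₁ - x.1) with hθ
      have hden : 0 < β₁ - x.1 := by linarith
      have hθ0 : 0 ≤ θ := div_nonneg (by linarith) (le_of_lt hden)
      have hθ1 : θ ≤ 1 := by
        rw [hθ, div_le_one hden]
        linarith
      set pt : ℝ × ℝ := θ • x + (1 - θ) • ((β₁, 0) : ℝ × ℝ) with hpt
      have hpthull : pt ∈ convexHull ℝ (↑F : Set (ℝ × ℝ)) :=
        (convex_convexHull ℝ _) hxF hβF hθ0 (by linarith) (by ring)
      have hpt1 : pt.1 = α := by
        rw [hpt]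
        simp only [Prod.fst_add, Prod.smul_fst, smul_eq_mul]
        rw [hθ]
        field_simp
        ring
      have hpt2 : pt.2 = θ * x.2 := by
        rw [hpt]
        simp only [Prod.snd_add, Prod.smul_snd, smul_eq_mul]
        ring
      have hx2nn : 0 ≤ x.2 := by
        rw [← hxd]
        exact dW_nonneg p S hp hκ hSb hα.1
      have hpt2le : pt.2 ≤ dW p Y S κ α := by
        rw [hpt2, hxd]
        nlinarith
      have hmemd : pt.2 ∈ {c | (α, c) ∈ convexHull ℝ (↑F : Set (ℝ × ℝ))} := by
        rw [Set.mem_setOf_eq, show ((α, pt.2) : ℝ × ℝ) = pt from Prod.ext hpt1.symm rfl]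
        exact hpthull
      exact le_antisymm (le_csInf ⟨_, hmemd⟩ fun c hc => slice_ge α c hc)
        (le_trans (csInf_le hbdd hmemd) hpt2le)
  · -- the flat part of the curve
    have hdα : dW p Y S κ α = 0 :=
      le_antisymm (hdβ ▸ dW_mono p S hp hκ hSb hβ0 (le_of_lt hβα))
        (dW_nonneg p S hp hκ hSb hα.1)
    by_cases hne : {c | (α, c) ∈ convexHull ℝ (↑F : Set (ℝ × ℝ))}.Nonempty
    · obtain ⟨c₀, hc₀⟩ := hne
      rw [Set.mem_setOf_eq, Finset.convexHull_eq] at hc₀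
      obtain ⟨wgt, hw0, hw1, hcm⟩ := hc₀
      have hsum : ∑ z ∈ F, wgt z • z = (α, c₀) := by
        rw [Finset.centerMass_eq_of_sum_1 _ id hw1] at hcm
        simpa using hcm
      have hfst : ∑ z ∈ F, wgt z * z.1 = α := by
        have := congrArg Prod.fst hsum
        rw [Prod.fst_sum] at this
        simpa [smul_eq_mul] using this
      have hex : ∃ z ∈ F, wgt z ≠ 0 ∧ α ≤ z.1 := by
        by_contra hcon
        push_neg at hcon
        have hex0 : ∃ z ∈ F, wgt z ≠ 0 := by
          by_contra hcon0
          push_neg at hcon0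
          rw [Finset.sum_eq_zero hcon0] at hw1
          norm_num at hw1
        obtain ⟨z₀, hz₀, hz₀0⟩ := hex0
        have hstrict : ∑ z ∈ F, wgt z * z.1 < ∑ z ∈ F, wgt z * α := by
          refine Finset.sum_lt_sum (fun z hz => ?_) ⟨z₀, hz₀, ?_⟩
          · by_cases h0 : wgt z = 0
            · rw [h0]; simp
            · exact mul_le_mul_of_nonneg_left (le_of_lt (hcon z hz h0)) (hw0 z hz)
          · have := hcon z₀ hz₀ hz₀0
            have hwz : 0 < wgt z₀ := lt_of_le_of_ne (hw0 z₀ hz₀) (Ne.symm hz₀0)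
            nlinarith
        rw [hfst, ← Finset.sum_mul, hw1, one_mul] at hstrict
        exact lt_irrefl α hstrict
      obtain ⟨zs, hzsF, hzs0, hzs1⟩ := hex
      have hzsprops := hFprops zs hzsF
      have hzs2 : zs.2 = 0 := by
        have h1 : dW p Y S κ zs.1 ≤ 0 := by
          rw [← hdβ]
          exact dW_mono p S hp hκ hSb hβ0 (by linarith)
        have h2 : 0 ≤ dW p Y S κ zs.1 := dW_nonneg p S hp hκ hSb (by linarith)
        rw [← hzsprops.2]
        linarith
      have hβzs : β₁ < zs.1 := by linarith
      set θ : ℝ := (zs.1 - α) / (zs.1 - β₁) with hθ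
      have hden : 0 < zs.1 - β₁ := by linarith
      have hθ0 : 0 ≤ θ := div_nonneg (by linarith) (le_of_lt hden)
      have hθ1 : θ ≤ 1 := by
        rw [hθ, div_le_one hden]
        linarith
      set pt : ℝ × ℝ := θ • ((β₁, 0) : ℝ × ℝ) + (1 - θ) • zs with hpt
      have hzsF' : (zs : ℝ × ℝ) ∈ convexHull ℝ (↑F : Set (ℝ × ℝ)) :=
        subset_convexHull ℝ _ hzsF
      have hpthull : pt ∈ convexHull ℝ (↑F : Set (ℝ × ℝ)) :=
        (convex_convexHull ℝ _) hβF hzsF' hθ0 (by linarith) (by ring)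
      have hpt1 : pt.1 = α := by
        rw [hpt]
        simp only [Prod.fst_add, Prod.smul_fst, smul_eq_mul]
        rw [hθ]
        field_simp
        ring
      have hpt2 : pt.2 = 0 := by
        rw [hpt]
        simp only [Prod.snd_add, Prod.smul_snd, smul_eq_mul, hzs2]
        ring
      have hmem0 : (0:ℝ) ∈ {c | (α, c) ∈ convexHull ℝ (↑F : Set (ℝ × ℝ))} := by
        rw [Set.mem_setOf_eq, show ((α, (0:ℝ)) : ℝ × ℝ) = pt from
          Prod.ext hpt1.symm hpt2.symm]
        exact hpthull
      rw [hdα]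
      refine le_antisymm ?_ (csInf_le hbdd hmem0)
      refine le_csInf ⟨_, hmem0⟩ fun c hc => ?_
      rw [← hdα]
      exact slice_ge α c hc
    · rw [Set.not_nonempty_iff_eq_empty] at hne
      rw [hne, Real.sInf_empty, hdα]

end ChgPt

end Work

/-- `d(α)` is convex and piecewise linear on `[0,1]`, with break-points
achieved by non-randomized stopping times (its graph is the lower envelope of the
convex hull of finitely many points achieved by non-randomized stopping times). -/
theorem d_convex_piecewise_linear
    {Ω 𝒳 𝒴 : Type*} [Fintype Ω]
    (p : Ω → ℝ) (hp : IsProbW p) (X : ℕ → Ω → 𝒳) (Y : ℕ → Ω → 𝒴) (κ : ℕ) (hκ : 1 ≤ κ)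
    (S : Ω → ℕ) (hS : IsSTW X S) (hSb : ∀ ω, 1 ≤ S ω ∧ S ω ≤ κ) :
    ConvexOn ℝ (Set.Icc (0 : ℝ) 1) (dW p Y S κ) ∧
    ∃ F : Finset (ℝ × ℝ),
      (∀ z ∈ F, ∃ t : (ℕ → 𝒴) → ℕ, IsStopFun t ∧ (∀ f, 1 ≤ t f ∧ t f ≤ κ) ∧
        faR p Y S κ (detKer t) = z.1 ∧ delayR p Y S κ (detKer t) = z.2 ∧
        dW p Y S κ z.1 = z.2) ∧
      (∀ α ∈ Set.Icc (0 : ℝ) 1,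
        dW p Y S κ α = sInf {c | (α, c) ∈ convexHull ℝ (↑F : Set (ℝ × ℝ))}) := by
  refine ⟨ChgPt.dW_convexOn p S hp hκ hSb,
    (ChgPt.DD p Y S κ).filter (fun z => dW p Y S κ z.1 = z.2), ?_, ?_⟩
  · intro z hz
    rw [Finset.mem_filter] at hz
    obtain ⟨s, hs, hpt⟩ := ChgPt.DD_elim p S hκ hz.1
    exact ⟨ChgPt.extST Y κ s, ChgPt.extST_stopFun hs, ChgPt.extST_bounds hs hκ,
      congrArg Prod.fst hpt, congrArg Prod.snd hpt, hz.2⟩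
  · intro α hα
    exact ChgPt.main_slice p S hp hκ hSb hα
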